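/- arXiv:1601.07010 — 2 statements merged into one kernel-verified Lean document; each statement's English description precedes it below -/
import Mathlib

section
/- Suppose B = A + E for matrices A, E ∈ ℂ^{D×N} with ‖E‖_F ≤ ((√2 − 1)/(√(D−d) + 1)) · ‖(A)_d − A‖_F. Then ‖(B)_d − A‖_F ≤ √2 ‖(A)_d − A‖_F. -/
open Matrix

/-- Frobenius norm of a complex matrix. -/
noncomputable def frob {m n : Type*} [Fintype m] [Fintype n] (M : Matrix m n ℂ) : ℝ :=
  Real.sqrt (∑ i, ∑ j, ‖M i j‖ ^ 2)

/-- `B` is a best rank-`d` approximation of `A` in Frobenius norm. -/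
def IsBestRankApprox {m n : Type*} [Fintype m] [Fintype n] (d : ℕ)
    (A B : Matrix m n ℂ) : Prop :=
  B.rank ≤ d ∧ ∀ C : Matrix m n ℂ, C.rank ≤ d → frob (B - A) ≤ frob (C - A)

/-- The singular values of `M` : nonnegative square roots of the eigenvalues of `M * Mᴴ`
(unsorted enumeration). -/
noncomputable def singVals {D : ℕ} {n : Type*} [Fintype n] (M : Matrix (Fin D) n ℂ) :
    Fin D → ℝ :=
  fun i => Real.sqrt ((Matrix.isHermitian_mul_conjTranspose_self M).eigenvalues i)

/-- `C` is a scaled left-singular-vector form of `M`, i.e. `C = U Σ = M V` for some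
SVD `M = U Σ Vᴴ` of `M`: equivalently `C = M V` with `V` unitary and `Cᴴ C` diagonal with
nonnegative real entries. -/
def IsScaledLeftSV {D : ℕ} {n : Type*} [Fintype n] [DecidableEq n]
    (M C : Matrix (Fin D) n ℂ) : Prop :=
  ∃ V ∈ Matrix.unitaryGroup n ℂ, C = M * V ∧
    ∃ t : n → ℝ, (∀ j, 0 ≤ t j) ∧ Cᴴ * C = Matrix.diagonal (fun j => (t j : ℂ))
lemma frob_eq_norm {m n : Type*} [Fintype m] [Fintype n] (M : Matrix m n ℂ) :
    frob M = ‖(show EuclideanSpace ℂ (m × n) from WithLp.toLp 2 (fun p : m × n => M p.1 p.2))‖ := by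
  rw [frob, EuclideanSpace.norm_eq, Fintype.sum_prod_type]

lemma frob_add_le {m n : Type*} [Fintype m] [Fintype n] (X Y : Matrix m n ℂ) :
    frob (X + Y) ≤ frob X + frob Y := by
  rw [frob_eq_norm, frob_eq_norm, frob_eq_norm]
  exact norm_add_le (show EuclideanSpace ℂ (m × n) from WithLp.toLp 2 (fun p : m × n => X p.1 p.2))
    (show EuclideanSpace ℂ (m × n) from WithLp.toLp 2 (fun p : m × n => Y p.1 p.2))

lemma frob_neg {m n : Type*} [Fintype m] [Fintype n] (X : Matrix m n ℂ) :
    frob (-X) = frob X := by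
  simp [frob]

/-- If `B = A + E` with `‖E‖_F ≤ ((√2−1)/(√(D−d)+1)) ‖(A)_d − A‖_F`, then
`‖(B)_d − A‖_F ≤ √2 ‖(A)_d − A‖_F`. -/
theorem stmt10 {D N : ℕ} (d : ℕ) (hd1 : 1 ≤ d) (hdD : d ≤ D)
    (A E B : Matrix (Fin D) (Fin N) ℂ) (hB : B = A + E)
    (Ad : Matrix (Fin D) (Fin N) ℂ) (hAd : IsBestRankApprox d A Ad)
    (hE : frob E ≤ (Real.sqrt 2 - 1) / (Real.sqrt ((D : ℝ) - d) + 1) * frob (Ad - A))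
    (Bd : Matrix (Fin D) (Fin N) ℂ) (hBd : IsBestRankApprox d B Bd) :
    frob (Bd - A) ≤ Real.sqrt 2 * frob (Ad - A) := by
  have hen : 0 ≤ frob (Ad - A) := Real.sqrt_nonneg _
  have hEn : 0 ≤ frob E := Real.sqrt_nonneg _
  have h1 : frob (Bd - A) ≤ frob (Bd - B) + frob E := by
    have h : Bd - A = (Bd - B) + E := by rw [hB]; abel
    rw [h]; exact frob_add_le _ _
  have h2 : frob (Bd - B) ≤ frob (Ad - B) := hBd.2 Ad hAd.1
  have h3 : frob (Ad - B) ≤ frob (Ad - A) + frob E := by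
    have h : Ad - B = (Ad - A) + (-E) := by rw [hB]; abel
    rw [h]
    calc frob ((Ad - A) + (-E)) ≤ frob (Ad - A) + frob (-E) := frob_add_le _ _
      _ = frob (Ad - A) + frob E := by rw [frob_neg]
  by_cases hdd : d < D
  · have hge : (1:ℝ) ≤ Real.sqrt ((D:ℝ) - d) := by
      rw [show (1:ℝ) = Real.sqrt 1 by simp]
      apply Real.sqrt_le_sqrt
      have : (d:ℝ) + 1 ≤ D := by exact_mod_cast hdd
      linarith
    have hs2 : (1:ℝ) ≤ Real.sqrt 2 := by
      rw [show (1:ℝ) = Real.sqrt 1 by simp]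
      exact Real.sqrt_le_sqrt (by norm_num)
    have hE' : frob E ≤ (Real.sqrt 2 - 1) / 2 * frob (Ad - A) := by
      refine hE.trans (mul_le_mul_of_nonneg_right ?_ hen)
      apply div_le_div_of_nonneg_left (by linarith) (by norm_num)
      linarith
    nlinarith
  · have hdd' : d = D := le_antisymm hdD (not_lt.mp hdd)
    have hArank : A.rank ≤ d := by
      rw [hdd']
      simpa using A.rank_le_card_height
    have he0 : frob (Ad - A) = 0 := by
      have h := hAd.2 A hArank
      have : frob (A - A) = 0 := by simp [frob]
      linarith [this ▸ h]
    have hE0 : frob E = 0 := by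
      rw [he0, mul_zero] at hE
      linarith
    have h4 : frob (Bd - B) ≤ frob (A - B) := hBd.2 A hArank
    have h5 : frob (A - B) = frob E := by
      have h : A - B = -E := by rw [hB]; abel
      rw [h, frob_neg]
    rw [he0, mul_zero]
    linarith
end

section
/- Consider the q-level hierarchical SVD algorithm applied to A ∈ ℂ^{D×N} partitioned into M = n^q column blocks: at each level, groups of n current blocks are replaced by the concatenation of the rank-d truncated scaled left singular vector matrices ((U Σ)_d) of each block. Then the final output matrix B^{q+1,1} satisfies: there exists a unitary matrix W with (B^{q+1,1})_d (in scaled left-singular-vector form) = A W + Ψ, where ‖Ψ‖_F ≤ ((1+√2)^{q+1} − 1) · ‖(A)_d − A‖_F. -/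
open Matrix

attribute [irreducible] frob IsBestRankApprox IsScaledLeftSV

/-- `HierOut D d q A B` : `B` is a possible output of `q` levels of the hierarchical SVD
algorithm applied to `A` with truncation rank `d`: at each level the current blocks are grouped,
and each group is replaced by the concatenation of the scaled left-singular-vector forms
`overline{(·)_d}` of the rank-`d` truncations of its member blocks (`B^{1,i} = A^i`,
`B^{p+1,i} = [overline{(B^{p,(i-1)n+1})_d} | ... | overline{(B^{p,in})_d}]`). -/
inductive HierOut (D d : ℕ) :
    {ι : Type} → ℕ → Matrix (Fin D) ι ℂ → Matrix (Fin D) ι ℂ → Prop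
  | base {ι : Type} (A : Matrix (Fin D) ι ℂ) : HierOut D d 0 A A
  | step {n : ℕ} {ιs : Fin n → Type} [∀ j, Fintype (ιs j)] [∀ j, DecidableEq (ιs j)] {q : ℕ}
      (A : Matrix (Fin D) ((j : Fin n) × ιs j) ℂ)
      (Bp Bd Cc : (j : Fin n) → Matrix (Fin D) (ιs j) ℂ)
      (hrec : ∀ j, HierOut D d q (Matrix.of fun r c => A r ⟨j, c⟩) (Bp j))
      (hBd : ∀ j, IsBestRankApprox d (Bp j) (Bd j))
      (hC : ∀ j, IsScaledLeftSV (Bd j) (Cc j)) :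
      HierOut D d (q + 1) A (Matrix.of fun r (p : (j : Fin n) × ιs j) => Cc p.1 r p.2)

section FrobAux

attribute [local instance] Matrix.frobeniusSeminormedAddCommGroup

variable {m n : Type*} [Fintype m] [Fintype n]

lemma frob_eq_norm_s15 (M : Matrix m n ℂ) : frob M = ‖M‖ := by
  unfold frob
  rw [Matrix.frobenius_norm_def, Real.sqrt_eq_rpow]
  congr 1
  refine Finset.sum_congr rfl fun i _ => Finset.sum_congr rfl fun j _ => ?_
  rw [show ((2 : ℝ)) = ((2 : ℕ) : ℝ) by norm_num, Real.rpow_natCast]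

lemma frob_nonneg (M : Matrix m n ℂ) : 0 ≤ frob M := by
  rw [frob_eq_norm_s15]; exact norm_nonneg _

lemma frob_sub_le' (X Y : Matrix m n ℂ) : frob (X - Y) ≤ frob X + frob Y := by
  simp only [frob_eq_norm_s15]; exact norm_sub_le _ _

lemma frob_sub_le (X Y Z : Matrix m n ℂ) :
    frob (X - Z) ≤ frob (X - Y) + frob (Y - Z) := by
  simp only [frob_eq_norm_s15]
  simpa [dist_eq_norm] using dist_triangle X Y Z

lemma frob_sq (M : Matrix m n ℂ) : frob M ^ 2 = ∑ i, ∑ j, ‖M i j‖ ^ 2 := by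
  unfold frob
  exact Real.sq_sqrt (by positivity)

lemma sum_sq_eq_trace (M : Matrix m n ℂ) :
    ((∑ i, ∑ j, ‖M i j‖ ^ 2 : ℝ) : ℂ) = Matrix.trace (M * Mᴴ) := by
  rw [Matrix.trace]
  push_cast
  refine Finset.sum_congr rfl fun i _ => ?_
  rw [Matrix.diag_apply, Matrix.mul_apply]
  refine Finset.sum_congr rfl fun j _ => ?_
  rw [Matrix.conjTranspose_apply,
    show star (M i j) = (starRingEnd ℂ) (M i j) from rfl, Complex.mul_conj]
  norm_cast
  rw [Complex.normSq_eq_norm_sq]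

lemma frob_mul_unitary [DecidableEq n] (M : Matrix m n ℂ) {V : Matrix n n ℂ}
    (hV : V ∈ Matrix.unitaryGroup n ℂ) : frob (M * V) = frob M := by
  have hVV : V * Vᴴ = 1 := by
    rw [← Matrix.star_eq_conjTranspose]
    exact Matrix.mem_unitaryGroup_iff.mp hV
  have ht : Matrix.trace ((M * V) * (M * V)ᴴ) = Matrix.trace (M * Mᴴ) := by
    rw [Matrix.conjTranspose_mul, Matrix.mul_assoc, ← Matrix.mul_assoc V, hVV,
      Matrix.one_mul]
  have hsum : (∑ i, ∑ j, ‖(M * V) i j‖ ^ 2 : ℝ) = ∑ i, ∑ j, ‖M i j‖ ^ 2 :=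
    Complex.ofReal_injective (by rw [sum_sq_eq_trace, sum_sq_eq_trace, ht])
  unfold frob
  rw [hsum]

end FrobAux

section BlockAux

variable {m : Type*} [Fintype m] {nn : ℕ} {ιs : Fin nn → Type}
  [∀ j, Fintype (ιs j)] [∀ j, DecidableEq (ιs j)]

/-- The `j`-th column block of a matrix over a sigma type. -/
def colBlock (M : Matrix m ((j : Fin nn) × ιs j) ℂ) (j : Fin nn) :
    Matrix m (ιs j) ℂ :=
  Matrix.of fun r c => M r ⟨j, c⟩

lemma frob_sq_sigma (M : Matrix m ((j : Fin nn) × ιs j) ℂ) :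
    frob M ^ 2 = ∑ j, frob (colBlock M j) ^ 2 := by
  simp only [frob_sq]
  have h : ∀ i, ∑ p : (j : Fin nn) × ιs j, ‖M i p‖ ^ 2
      = ∑ j, ∑ c, ‖M i ⟨j, c⟩‖ ^ 2 := fun i => by
    rw [← Finset.univ_sigma_univ, Finset.sum_sigma]
  simp_rw [h]
  rw [Finset.sum_comm]
  rfl

lemma rank_colBlock_le (M : Matrix m ((j : Fin nn) × ιs j) ℂ) (j : Fin nn) :
    (colBlock M j).rank ≤ M.rank := by
  classical
  have h : colBlock M j = M *
      (Matrix.of fun (p : (j : Fin nn) × ιs j) c =>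
        if p = ⟨j, c⟩ then (1 : ℂ) else 0) := by
    ext r c
    rw [Matrix.mul_apply, Finset.sum_eq_single (⟨j, c⟩ : (j : Fin nn) × ιs j)]
    · simp [colBlock]
    · intro b _ hb
      simp [Matrix.of_apply, hb]
    · simp
  rw [h]
  exact Matrix.rank_mul_le_left _ _

lemma blockDiagonal'_mem_unitaryGroup (W : ∀ j, Matrix (ιs j) (ιs j) ℂ)
    (hW : ∀ j, W j ∈ Matrix.unitaryGroup (ιs j) ℂ) :
    Matrix.blockDiagonal' W ∈ Matrix.unitaryGroup ((j : Fin nn) × ιs j) ℂ := by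
  rw [Matrix.mem_unitaryGroup_iff, Matrix.star_eq_conjTranspose,
    Matrix.blockDiagonal'_conjTranspose, ← Matrix.blockDiagonal'_mul]
  have h1 : ∀ j, W j * (W j)ᴴ = 1 := fun j => by
    have := Matrix.mem_unitaryGroup_iff.mp (hW j)
    rwa [Matrix.star_eq_conjTranspose] at this
  rw [show (fun k => W k * (W k)ᴴ)
      = (fun k => (1 : Matrix (ιs k) (ιs k) ℂ)) from funext h1]
  exact Matrix.blockDiagonal'_one

lemma colBlock_mul_blockDiagonal' (A : Matrix m ((j : Fin nn) × ιs j) ℂ)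
    (W : ∀ j, Matrix (ιs j) (ιs j) ℂ) (j : Fin nn) :
    colBlock (A * Matrix.blockDiagonal' W) j = colBlock A j * W j := by
  ext r c
  simp only [colBlock, Matrix.of_apply, Matrix.mul_apply]
  rw [← Finset.univ_sigma_univ, Finset.sum_sigma]
  rw [Finset.sum_eq_single j]
  · refine Finset.sum_congr rfl fun b _ => ?_
    rw [Matrix.blockDiagonal'_apply_eq]
  · intro k _ hk
    apply Finset.sum_eq_zero
    intro b _
    rw [Matrix.blockDiagonal'_apply_ne _ _ _ hk, mul_zero]
  · simp

end BlockAux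

lemma hsvd_main {D : ℕ} (d : ℕ) {ι : Type} {q : ℕ} {A B : Matrix (Fin D) ι ℂ}
    (h : HierOut D d q A B) :
    ∀ [instF : Fintype ι] [instD : DecidableEq ι]
      (Bd : Matrix (Fin D) ι ℂ), IsBestRankApprox d B Bd →
      ∀ C : Matrix (Fin D) ι ℂ, IsScaledLeftSV Bd C →
      ∀ N : Matrix (Fin D) ι ℂ, N.rank ≤ d →
      ∃ W ∈ Matrix.unitaryGroup ι ℂ, ∃ Ψ : Matrix (Fin D) ι ℂ,
        C = A * W + Ψ ∧
        frob Ψ ≤ ((1 + Real.sqrt 2) ^ (q + 1) - 1) * frob (N - A) := by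
  have hs : (1 : ℝ) ≤ Real.sqrt 2 := by
    nlinarith [Real.sq_sqrt (by norm_num : (0:ℝ) ≤ 2), Real.sqrt_nonneg 2]
  induction h with
  | base A =>
    intro instF instD Bd hBd C hC N hN
    unfold IsScaledLeftSV at hC
    unfold IsBestRankApprox at hBd
    obtain ⟨V, hV, hCV, -⟩ := hC
    refine ⟨V, hV, (Bd - A) * V, ?_, ?_⟩
    · rw [hCV, Matrix.sub_mul]
      abel
    · rw [frob_mul_unitary _ hV]
      have h1 : frob (Bd - A) ≤ frob (N - A) := hBd.2 N hN
      have h2 : 0 ≤ frob (N - A) := frob_nonneg _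
      have h3 : ((1 : ℝ) + Real.sqrt 2) ^ (0 + 1) - 1 = Real.sqrt 2 := by ring
      rw [h3]
      nlinarith
  | @step nn ιs instFs instDs q A Bp Bdj Cc hrec hBdj hCc ih =>
    intro instF instD Bdq hBdq Cq hCq N hN
    have hF : instF = Sigma.instFintype := Subsingleton.elim _ _
    subst hF
    have hD : instD = Sigma.instDecidableEqSigma := Subsingleton.elim _ _
    subst hD
    set cq : ℝ := (1 + Real.sqrt 2) ^ (q + 1) - 1 with hcq
    have hcq0 : 0 ≤ cq := by
      have : (1:ℝ) ≤ (1 + Real.sqrt 2) ^ (q + 1) := one_le_pow₀ (by linarith)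
      simp only [hcq]; linarith
    -- apply the induction hypothesis blockwise
    have key : ∀ j, ∃ W ∈ Matrix.unitaryGroup (ιs j) ℂ,
        ∃ Ψ : Matrix (Fin D) (ιs j) ℂ,
          Cc j = colBlock A j * W + Ψ ∧
          frob Ψ ≤ cq * frob (colBlock N j - colBlock A j) := by
      intro j
      exact ih j (Bdj j) (hBdj j) (Cc j) (hCc j) (colBlock N j)
        (le_trans (rank_colBlock_le N j) hN)
    choose W hW Ψ hjeq hjb using key
    set Wb : Matrix ((j : Fin nn) × ιs j) ((j : Fin nn) × ιs j) ℂ :=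
      Matrix.blockDiagonal' W with hWbdef
    have hWb : Wb ∈ Matrix.unitaryGroup ((j : Fin nn) × ιs j) ℂ :=
      blockDiagonal'_mem_unitaryGroup W hW
    set Bbig : Matrix (Fin D) ((j : Fin nn) × ιs j) ℂ :=
      Matrix.of fun r (p : (j : Fin nn) × ιs j) => Cc p.1 r p.2 with hBbig
    set ΨB : Matrix (Fin D) ((j : Fin nn) × ιs j) ℂ :=
      Matrix.of fun r (p : (j : Fin nn) × ιs j) => Ψ p.1 r p.2 with hΨB
    have hBeq : Bbig = A * Wb + ΨB := by
      ext r p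
      obtain ⟨j, c⟩ := p
      have h1 : Cc j r c = (colBlock A j * W j) r c + Ψ j r c := by
        rw [hjeq j]; rfl
      have h2 : (A * Wb) r ⟨j, c⟩ = (colBlock A j * W j) r c := by
        have := congrFun (congrFun (colBlock_mul_blockDiagonal' A W j) r) c
        simpa [colBlock] using this
      simp only [hBbig, hΨB, Matrix.of_apply, Matrix.add_apply, h2]
      exact h1
    have hcolΨ : ∀ j, colBlock ΨB j = Ψ j := fun j => rfl
    have hΨBle : frob ΨB ≤ cq * frob (N - A) := by
      have hsq : frob ΨB ^ 2 ≤ (cq * frob (N - A)) ^ 2 := by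
        rw [frob_sq_sigma ΨB]
        have hb : ∀ j, frob (colBlock ΨB j) ^ 2
            ≤ cq ^ 2 * frob (colBlock (N - A) j) ^ 2 := by
          intro j
          rw [hcolΨ j]
          have hNA : colBlock (N - A) j = colBlock N j - colBlock A j := rfl
          rw [hNA, ← mul_pow]
          exact pow_le_pow_left₀ (frob_nonneg _) (hjb j) 2
        calc ∑ j, frob (colBlock ΨB j) ^ 2
            ≤ ∑ j, cq ^ 2 * frob (colBlock (N - A) j) ^ 2 :=
              Finset.sum_le_sum fun j _ => hb j
          _ = cq ^ 2 * ∑ j, frob (colBlock (N - A) j) ^ 2 := by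
              rw [Finset.mul_sum]
          _ = cq ^ 2 * frob (N - A) ^ 2 := by rw [← frob_sq_sigma]
          _ = (cq * frob (N - A)) ^ 2 := by ring
      have h1 := Real.sqrt_le_sqrt hsq
      rwa [Real.sqrt_sq (frob_nonneg _),
        Real.sqrt_sq (mul_nonneg hcq0 (frob_nonneg _))] at h1
    -- final assembly
    unfold IsScaledLeftSV at hCq
    unfold IsBestRankApprox at hBdq
    obtain ⟨V, hV, hCV, -⟩ := hCq
    refine ⟨Wb * V, mul_mem hWb hV, (Bdq - A * Wb) * V, ?_, ?_⟩
    · rw [hCV, Matrix.sub_mul, ← Matrix.mul_assoc]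
      abel
    · rw [frob_mul_unitary _ hV]
      have e0 : 0 ≤ frob (N - A) := frob_nonneg _
      have p0 : 0 ≤ frob ΨB := frob_nonneg _
      have h1 : frob (Bdq - Bbig) ≤ frob (N * Wb - Bbig) :=
        hBdq.2 (N * Wb) (le_trans (Matrix.rank_mul_le_left _ _) hN)
      have h2 : frob (N * Wb - Bbig) ≤ frob (N - A) + frob ΨB := by
        have he : N * Wb - Bbig = (N - A) * Wb - ΨB := by
          rw [hBeq, Matrix.sub_mul]; abel
        rw [he]
        calc frob ((N - A) * Wb - ΨB) ≤ frob ((N - A) * Wb) + frob ΨB :=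
              frob_sub_le' _ _
          _ = frob (N - A) + frob ΨB := by rw [frob_mul_unitary _ hWb]
      have h3 : frob (Bdq - A * Wb)
          ≤ frob (Bdq - Bbig) + frob (Bbig - A * Wb) := frob_sub_le _ _ _
      have h4 : Bbig - A * Wb = ΨB := by rw [hBeq]; abel
      rw [h4] at h3
      have hpow : (1 + Real.sqrt 2) ^ (q + 1 + 1)
          = (1 + Real.sqrt 2) ^ (q + 1) * (1 + Real.sqrt 2) := pow_succ _ _
      have ht : (1:ℝ) ≤ (1 + Real.sqrt 2) ^ (q + 1) := one_le_pow₀ (by linarith)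
      have hprod : 0 ≤ (Real.sqrt 2 - 1) * ((1 + Real.sqrt 2) ^ (q + 1) * frob (N - A)) :=
        mul_nonneg (by linarith) (mul_nonneg (by linarith) e0)
      rw [hpow]
      simp only [hcq] at hΨBle
      nlinarith [hΨBle, h1, h2, h3, e0, p0]

/-- Error bound for the `q`-level hierarchical SVD algorithm: if `B` is the output of `q` merge
levels applied to `A` (`B = B^{q+1,1}`) and `C` is the scaled left-singular-vector form of a
best rank-`d` approximation of `B`, then `C = A W + Ψ` with `W` unitary and
`‖Ψ‖_F ≤ ((1+√2)^{q+1} − 1) ‖(A)_d − A‖_F`. -/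
theorem stmt15 {D : ℕ} {ι : Type} [Fintype ι] [DecidableEq ι]
    (d q : ℕ) (hq : 1 ≤ q)
    (A B : Matrix (Fin D) ι ℂ)
    (h : HierOut D d q A B)
    (Bd : Matrix (Fin D) ι ℂ) (hBd : IsBestRankApprox d B Bd)
    (C : Matrix (Fin D) ι ℂ) (hC : IsScaledLeftSV Bd C)
    (Ad : Matrix (Fin D) ι ℂ) (hAd : IsBestRankApprox d A Ad) :
    ∃ W ∈ Matrix.unitaryGroup ι ℂ, ∃ Ψ : Matrix (Fin D) ι ℂ,
      C = A * W + Ψ ∧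
      frob Ψ ≤ ((1 + Real.sqrt 2) ^ (q + 1) - 1) * frob (Ad - A) := by
  have hr : Ad.rank ≤ d := by
    unfold IsBestRankApprox at hAd
    exact hAd.1
  exact hsvd_main d h Bd hBd C hC Ad hr
end
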